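/- arXiv:0907.2639 — 5 statements merged into one kernel-verified Lean document; each statement's English description precedes it below -/
import Mathlib

section
/- Let B be a real matrix with r linearly independent columns b_1, ..., b_r, with Gram-Schmidt orthogonalization b_1^*, ..., b_r^*. Let P = { y in R^r : ℓ ≤ By ≤ w }. Then the width of P along the last unit vector e_r satisfies width(e_r, P) ≤ ‖w − ℓ‖ / ‖b_r^*‖, where width(z,P) = max{⟨z,x⟩ : x ∈ P} − min{⟨z,x⟩ : x ∈ P}. -/
open scoped RealInnerProductSpace
open InnerProductSpace

lemma inner_gs_self {E : Type*} [NormedAddCommGroup E] [InnerProductSpace ℝ E] {n : ℕ}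
    (c : Fin n → E) (i : Fin n) :
    haveI : WellFoundedLT (Fin n) := inferInstance
    ⟪gramSchmidt ℝ c i, c i⟫ = ‖gramSchmidt ℝ c i‖ ^ 2 := by
  haveI : WellFoundedLT (Fin n) := inferInstance
  conv_lhs => rw [gramSchmidt_def'' ℝ c i]
  rw [inner_add_right, inner_sum, real_inner_self_eq_norm_sq]
  have h : ∀ j ∈ Finset.Iio i, ⟪gramSchmidt ℝ c i, gramSchmidt ℝ c j⟫ = (0:ℝ) :=
    fun j hj => gramSchmidt_orthogonal ℝ c (Finset.mem_Iio.mp hj).ne'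
  simp only [real_inner_smul_right]
  rw [Finset.sum_eq_zero (fun j hj => by rw [h j hj, mul_zero]), add_zero]



/-- The Gram-Schmidt orthogonalization of a finite family of vectors. -/
noncomputable def gsE {E : Type*} [NormedAddCommGroup E] [InnerProductSpace ℝ E] {r : ℕ}
    (c : Fin r → E) : Fin r → E :=
  haveI : WellFoundedLT (Fin r) := inferInstance
  InnerProductSpace.gramSchmidt ℝ c

/-- The columns of a real matrix, viewed as vectors in Euclidean space. -/
noncomputable def colsE (m r : ℕ) (B : Matrix (Fin m) (Fin r) ℝ) :
    Fin r → EuclideanSpace ℝ (Fin m) :=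
  fun j => (WithLp.equiv 2 (Fin m → ℝ)).symm fun i => B i j

/-- the width of `P = {y | ℓ ≤ By ≤ w}` along the last unit vector is at most
`‖w - ℓ‖ / ‖b_r^*‖`, where `b_r^*` is the last Gram-Schmidt vector of the columns of `B`. -/
theorem width_last_le (m r : ℕ) (B : Matrix (Fin m) (Fin (r + 1)) ℝ)
    (hB : LinearIndependent ℝ (colsE m (r + 1) B))
    (ℓ w : EuclideanSpace ℝ (Fin m))
    (P : Set (Fin (r + 1) → ℝ))
    (hP : P = {y | ∀ i, ℓ i ≤ B.mulVec y i ∧ B.mulVec y i ≤ w i})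
    (hne : P.Nonempty)
    (hba : BddAbove ((fun y => y (Fin.last r)) '' P))
    (hbb : BddBelow ((fun y => y (Fin.last r)) '' P)) :
    sSup ((fun y => y (Fin.last r)) '' P) - sInf ((fun y => y (Fin.last r)) '' P)
      ≤ ‖w - ℓ‖ / ‖gsE (colsE m (r + 1) B) (Fin.last r)‖ := by
  haveI : WellFoundedLT (Fin (r + 1)) := inferInstance
  set c := colsE m (r + 1) B with hc
  set g := gsE c (Fin.last r) with hgdef
  have hgne : g ≠ 0 := gramSchmidt_ne_zero (𝕜 := ℝ) (f := c) (Fin.last r) hB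
  have hg : 0 < ‖g‖ := norm_pos_iff.mpr hgne
  -- B.mulVec y as Euclidean vector
  set Bv : (Fin (r + 1) → ℝ) → EuclideanSpace ℝ (Fin m) :=
    fun y => (WithLp.equiv 2 (Fin m → ℝ)).symm (B.mulVec y) with hBvdef
  have hBv : ∀ y, Bv y = ∑ j, y j • c j := by
    intro y
    ext i
    simp [hBvdef, hc, colsE, Matrix.mulVec, dotProduct, mul_comm]
  have hinner : ∀ y, ⟪g, Bv y⟫ = y (Fin.last r) * ‖g‖ ^ 2 := by
    intro y
    rw [hBv, inner_sum]
    simp only [real_inner_smul_right]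
    rw [Finset.sum_eq_single (Fin.last r)]
    · rw [hgdef, gsE, inner_gs_self]
    · intro j _ hj
      have hjlt : j < Fin.last r := lt_of_le_of_ne (Fin.le_last j) hj
      rw [hgdef, gsE, gramSchmidt_inv_triangular ℝ c hjlt, mul_zero]
    · intro h; exact absurd (Finset.mem_univ _) h
  -- norm bound
  have hnorm : ∀ y ∈ P, ∀ y' ∈ P, ‖Bv y - Bv y'‖ ≤ ‖w - ℓ‖ := by
    intro y hy y' hy'
    rw [hP] at hy hy'
    rw [EuclideanSpace.norm_eq, EuclideanSpace.norm_eq]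
    apply Real.sqrt_le_sqrt
    apply Finset.sum_le_sum
    intro i _
    have h1 := hy i
    have h2 := hy' i
    have : ‖(Bv y - Bv y') i‖ ≤ ‖(w - ℓ) i‖ := by
      simp only [hBvdef, Real.norm_eq_abs]
      have hwl : (w - ℓ) i = w i - ℓ i := rfl
      have hby : (Bv y - Bv y') i = B.mulVec y i - B.mulVec y' i := rfl
      rw [hwl, hby] at *
      rw [abs_le, abs_of_nonneg (by linarith)]
      constructor <;> linarith
    exact pow_le_pow_left₀ (norm_nonneg _) this 2
  -- key bound
  have hkey : ∀ y ∈ P, ∀ y' ∈ P,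
      y (Fin.last r) - y' (Fin.last r) ≤ ‖w - ℓ‖ / ‖g‖ := by
    intro y hy y' hy'
    have h1 : (y (Fin.last r) - y' (Fin.last r)) * ‖g‖ ^ 2 = ⟪g, Bv y - Bv y'⟫ := by
      rw [inner_sub_right, hinner, hinner]; ring
    have h2 : ⟪g, Bv y - Bv y'⟫ ≤ ‖g‖ * ‖Bv y - Bv y'‖ := real_inner_le_norm _ _
    have h3 := hnorm y hy y' hy'
    rw [le_div_iff₀ hg]
    nlinarith
  -- finish
  obtain ⟨y₀, hy₀⟩ := hne
  have hSne : ((fun y => y (Fin.last r)) '' P).Nonempty := ⟨_, ⟨y₀, hy₀, rfl⟩⟩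
  have hsup : sSup ((fun y => y (Fin.last r)) '' P)
      ≤ sInf ((fun y => y (Fin.last r)) '' P) + ‖w - ℓ‖ / ‖g‖ := by
    apply csSup_le hSne
    rintro x ⟨y, hy, rfl⟩
    have : y (Fin.last r) - ‖w - ℓ‖ / ‖g‖ ≤ sInf ((fun y => y (Fin.last r)) '' P) := by
      apply le_csInf hSne
      rintro z ⟨y', hy', rfl⟩
      have := hkey y hy y' hy'
      linarith
    linarith
  linarith
end

section
/- Let B be a real m×r matrix with independent columns (r ≤ m), b_1^*, ..., b_r^* the Gram-Schmidt orthogonalization of its columns, and P = { y ∈ R^r : ℓ ≤ By ≤ w }. When reverse branch-and-bound (branching on variables y_r, y_{r-1}, ..., y_1 in that order) is applied to P, the number of nodes at the level of variable y_i is at most ∏_{j=i}^{r} ( ⌊‖w−ℓ‖/‖b_j^*‖⌋ + 1 ). -/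
noncomputable def instWF (n : ℕ) : WellFoundedLT (Fin n) := inferInstance

lemma normE_le {m : ℕ} (x z : EuclideanSpace ℝ (Fin m)) (h : ∀ j, |x j| ≤ |z j|) : ‖x‖ ≤ ‖z‖ := by
  rw [EuclideanSpace.norm_eq, EuclideanSpace.norm_eq]
  apply Real.sqrt_le_sqrt
  apply Finset.sum_le_sum
  intro j _
  simp only [Real.norm_eq_abs]
  exact pow_le_pow_left₀ (abs_nonneg _) (h j) 2

lemma mulVec_eq_sum (m r : ℕ) (B : Matrix (Fin m) (Fin (r+1)) ℝ) (z : Fin (r+1) → ℝ) :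
    ((WithLp.equiv 2 (Fin m → ℝ)).symm (B.mulVec z) : EuclideanSpace ℝ (Fin m))
      = ∑ k, z k • colsE m (r+1) B k := by
  ext j
  rw [show (∑ k, z k • colsE m (r+1) B k) j = ∑ k, (z k • colsE m (r+1) B k) j from
    by simp]
  simp [colsE, Matrix.mulVec, dotProduct, mul_comm]

open InnerProductSpace in
lemma key_ineq (m r : ℕ) (B : Matrix (Fin m) (Fin (r + 1)) ℝ)
    (hB : LinearIndependent ℝ (colsE m (r + 1) B))
    (ℓ w : EuclideanSpace ℝ (Fin m)) (i : Fin (r + 1)) (y y' : Fin (r + 1) → ℝ)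
    (hy : ∀ k, ℓ k ≤ B.mulVec y k ∧ B.mulVec y k ≤ w k)
    (hy' : ∀ k, ℓ k ≤ B.mulVec y' k ∧ B.mulVec y' k ≤ w k)
    (heq : ∀ k, i < k → y k = y' k) :
    |y i - y' i| * ‖gsE (colsE m (r + 1) B) i‖ ≤ ‖w - ℓ‖ := by
  classical
  haveI := instWF (r + 1)
  unfold gsE
  set c := colsE m (r + 1) B with hc
  have hbne : gramSchmidt ℝ c i ≠ 0 := gramSchmidt_ne_zero i hB
  have hbpos : 0 < ‖gramSchmidt ℝ c i‖ := norm_pos_iff.mpr hbne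
  set v : (Fin (r + 1) → ℝ) → EuclideanSpace ℝ (Fin m) :=
    fun z => (WithLp.equiv 2 (Fin m → ℝ)).symm (B.mulVec z) with hv
  have horth : ∀ k : Fin (r + 1), k < i → (inner ℝ (c k) (gramSchmidt ℝ c i) : ℝ) = 0 := by
    intro k hk
    rw [real_inner_comm]
    exact gramSchmidt_inv_triangular ℝ c hk
  have hself : (inner ℝ (c i) (gramSchmidt ℝ c i) : ℝ) = ‖gramSchmidt ℝ c i‖ ^ 2 := by
    conv_lhs => rw [gramSchmidt_def'' ℝ c i]
    rw [inner_add_left, real_inner_self_eq_norm_sq, sum_inner]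
    rw [Finset.sum_eq_zero, add_zero]
    intro j hj
    rw [real_inner_smul_left, gramSchmidt_orthogonal ℝ c (Finset.mem_Iio.mp hj).ne, mul_zero]
  have hinner : (inner ℝ (v y - v y') (gramSchmidt ℝ c i) : ℝ)
      = (y i - y' i) * ‖gramSchmidt ℝ c i‖ ^ 2 := by
    rw [hv]
    simp only [mulVec_eq_sum, ← hc]
    rw [← Finset.sum_sub_distrib]
    simp_rw [← sub_smul]
    rw [sum_inner, Finset.sum_eq_single i]
    · rw [real_inner_smul_left, hself]
    · intro k _ hki
      rw [real_inner_smul_left]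
      rcases lt_or_gt_of_ne hki with h | h
      · rw [horth k h, mul_zero]
      · rw [heq k h, sub_self, zero_mul]
    · intro h; exact absurd (Finset.mem_univ i) h
  have hcs : |(inner ℝ (v y - v y') (gramSchmidt ℝ c i) : ℝ)|
      ≤ ‖v y - v y'‖ * ‖gramSchmidt ℝ c i‖ := abs_real_inner_le_norm _ _
  have hnb : ‖v y - v y'‖ ≤ ‖w - ℓ‖ := by
    apply normE_le
    intro j
    have h1 := hy j; have h2 := hy' j
    have e1 : (v y - v y') j = B.mulVec y j - B.mulVec y' j := rfl
    have e2 : (w - ℓ) j = w j - ℓ j := rfl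
    have e3 : |w j - ℓ j| = w j - ℓ j := abs_of_nonneg (by linarith [h1.1, h1.2])
    rw [e1, e2, e3, abs_le]
    constructor <;> [linarith [h1.1, h2.2]; linarith [h1.2, h2.1]]
  have h3 : |y i - y' i| * ‖gramSchmidt ℝ c i‖ ^ 2 ≤ ‖w - ℓ‖ * ‖gramSchmidt ℝ c i‖ := by
    calc |y i - y' i| * ‖gramSchmidt ℝ c i‖ ^ 2
        = |(inner ℝ (v y - v y') (gramSchmidt ℝ c i) : ℝ)| := by
          rw [hinner, abs_mul,
            abs_of_nonneg (show (0:ℝ) ≤ ‖gramSchmidt ℝ c i‖ ^ 2 by positivity)]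
    _ ≤ ‖v y - v y'‖ * ‖gramSchmidt ℝ c i‖ := hcs
    _ ≤ ‖w - ℓ‖ * ‖gramSchmidt ℝ c i‖ := mul_le_mul_of_nonneg_right hnb (norm_nonneg _)
  rw [pow_two] at h3
  nlinarith [abs_nonneg (y i - y' i)]
lemma int_bdd (L : ℝ) (T : Set ℤ) (h : ∀ a ∈ T, ∀ b ∈ T, |(a : ℝ) - b| ≤ L) :
    T.Finite ∧ T.ncard ≤ ⌊L⌋₊ + 1 := by
  classical
  rcases T.eq_empty_or_nonempty with rfl | ⟨a₀, ha₀⟩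
  · simp
  have hL0 : 0 ≤ L := by simpa using h a₀ ha₀ a₀ ha₀
  have hbd : ∀ a ∈ T, ∀ b ∈ T, a - b ≤ ⌊L⌋ := by
    intro a ha b hb
    rw [Int.le_floor]
    calc ((a - b : ℤ) : ℝ) ≤ |(a : ℝ) - b| := by push_cast; exact le_abs_self _
    _ ≤ L := h a ha b hb
  have hfin : T.Finite := by
    apply Set.Finite.subset (Set.finite_Icc (a₀ - ⌊L⌋) (a₀ + ⌊L⌋))
    intro a ha
    exact Set.mem_Icc.mpr ⟨by linarith [hbd a₀ ha₀ a ha], by linarith [hbd a ha a₀ ha₀]⟩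
  refine ⟨hfin, ?_⟩
  set F := hfin.toFinset with hF
  have hFne : F.Nonempty := ⟨a₀, hfin.mem_toFinset.mpr ha₀⟩
  set amin := F.min' hFne with hamin
  have haminT : amin ∈ T := hfin.mem_toFinset.mp (F.min'_mem hFne)
  have hsub : F ⊆ Finset.Icc amin (amin + ⌊L⌋) := by
    intro a ha
    rw [Finset.mem_Icc]
    exact ⟨F.min'_le a ha, by linarith [hbd a (hfin.mem_toFinset.mp ha) amin haminT]⟩
  have hcard : T.ncard = F.card := Set.ncard_eq_toFinset_card T hfin
  rw [hcard]
  calc F.card ≤ (Finset.Icc amin (amin + ⌊L⌋)).card := Finset.card_le_card hsub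
  _ = (amin + ⌊L⌋ + 1 - amin).toNat := Int.card_Icc _ _
  _ = ⌊L⌋₊ + 1 := by
      rw [show amin + ⌊L⌋ + 1 - amin = ⌊L⌋ + 1 by ring]
      rw [← Int.floor_toNat]
      have : 0 ≤ ⌊L⌋ := Int.floor_nonneg.mpr hL0
      omega
lemma fiber_bound {α β : Type*} {s : Set α} (f : α → β) (t : Set β) (ht : t.Finite)
    (hmap : ∀ a ∈ s, f a ∈ t) (n : ℕ)
    (hfib : ∀ b : β, ({a ∈ s | f a = b}).Finite ∧ ({a ∈ s | f a = b}).ncard ≤ n) :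
    s.Finite ∧ s.ncard ≤ n * t.ncard := by
  classical
  have hsub : s ⊆ ⋃ b ∈ t, {a ∈ s | f a = b} := by
    intro a ha
    exact Set.mem_biUnion (hmap a ha) ⟨ha, rfl⟩
  have hsfin : s.Finite := (ht.biUnion fun b _ => (hfib b).1).subset hsub
  refine ⟨hsfin, ?_⟩
  have hFsub : hsfin.toFinset ⊆ ht.toFinset.biUnion (fun b => (hfib b).1.toFinset) := by
    intro a ha
    rw [Set.Finite.mem_toFinset] at ha
    rw [Finset.mem_biUnion]
    exact ⟨f a, ht.mem_toFinset.mpr (hmap a ha), (hfib (f a)).1.mem_toFinset.mpr ⟨ha, rfl⟩⟩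
  calc s.ncard = hsfin.toFinset.card := Set.ncard_eq_toFinset_card s hsfin
  _ ≤ (ht.toFinset.biUnion (fun b => (hfib b).1.toFinset)).card := Finset.card_le_card hFsub
  _ ≤ ∑ b ∈ ht.toFinset, ((hfib b).1.toFinset).card := Finset.card_biUnion_le
  _ ≤ ∑ _b ∈ ht.toFinset, n := by
      apply Finset.sum_le_sum
      intro b _
      rw [← Set.ncard_eq_toFinset_card _ (hfib b).1]
      exact (hfib b).2
  _ = ht.toFinset.card * n := by rw [Finset.sum_const, smul_eq_mul]
  _ = n * t.ncard := by rw [Set.ncard_eq_toFinset_card t ht, mul_comm]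

lemma inj_bound {α β : Type*} {s : Set α} (f : α → β) (hinj : Set.InjOn f s)
    (hfin : (f '' s).Finite) (n : ℕ) (hn : (f '' s).ncard ≤ n) :
    s.Finite ∧ s.ncard ≤ n := by
  have h1 : s.Finite := Set.Finite.of_finite_image hfin hinj
  exact ⟨h1, by rw [← Set.ncard_image_of_injOn hinj]; exact hn⟩

open InnerProductSpace in
lemma gsE_pos (m r : ℕ) (B : Matrix (Fin m) (Fin (r + 1)) ℝ)
    (hB : LinearIndependent ℝ (colsE m (r + 1) B)) (j : Fin (r + 1)) :
    0 < ‖gsE (colsE m (r + 1) B) j‖ := by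
  haveI := instWF (r + 1)
  unfold gsE
  exact norm_pos_iff.mpr (gramSchmidt_ne_zero j hB)


/-- when reverse branch-and-bound (branching on `y_r, y_{r-1}, ..., y_1` in this
order) is applied to `P = {y | ℓ ≤ By ≤ w}`, the nodes at the level of variable `y_i`
correspond to the integer tuples `(γ_i, ..., γ_r)` whose slice of `P` is nonempty; their
number is at most `∏_{j=i}^r (⌊‖w-ℓ‖/‖b_j^*‖⌋ + 1)`. -/
theorem bb_node_count (m r : ℕ) (B : Matrix (Fin m) (Fin (r + 1)) ℝ)
    (hB : LinearIndependent ℝ (colsE m (r + 1) B))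
    (ℓ w : EuclideanSpace ℝ (Fin m))
    (P : Set (Fin (r + 1) → ℝ))
    (hP : P = {y | ∀ i, ℓ i ≤ B.mulVec y i ∧ B.mulVec y i ≤ w i})
    (i : Fin (r + 1))
    (nodes : Set (Fin (r + 1) → ℤ))
    (hnodes : nodes = { g | (∃ y ∈ P, ∀ j, i ≤ j → y j = (g j : ℝ)) ∧
      (∀ j, j < i → g j = 0) }) :
    nodes.Finite ∧
      nodes.ncard ≤ ∏ j ∈ Finset.Icc i (Fin.last r),
        (⌊‖w - ℓ‖ / ‖gsE (colsE m (r + 1) B) j‖⌋₊ + 1) := by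
  classical
  subst hP hnodes
  set N : Fin (r + 1) → ℕ :=
    fun j => ⌊‖w - ℓ‖ / ‖gsE (colsE m (r + 1) B) j‖⌋₊ + 1 with hN
  induction i using Fin.reverseInduction with
  | last =>
    set S : Set (Fin (r + 1) → ℤ) :=
      { g | (∃ y ∈ {y | ∀ i, ℓ i ≤ B.mulVec y i ∧ B.mulVec y i ≤ w i},
          ∀ j, Fin.last r ≤ j → y j = (g j : ℝ)) ∧ (∀ j, j < Fin.last r → g j = 0) } with hS
    have hinj : Set.InjOn (fun g : Fin (r + 1) → ℤ => g (Fin.last r)) S := by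
      intro g hg g' hg' hf
      funext j
      rcases lt_or_eq_of_le (Fin.le_last j) with h | h
      · rw [hg.2 j h, hg'.2 j h]
      · subst h; exact hf
    have himg : ∀ a ∈ (fun g : Fin (r + 1) → ℤ => g (Fin.last r)) '' S,
        ∀ b ∈ (fun g : Fin (r + 1) → ℤ => g (Fin.last r)) '' S,
        |(a : ℝ) - b| ≤ ‖w - ℓ‖ / ‖gsE (colsE m (r + 1) B) (Fin.last r)‖ := by
      rintro a ⟨g, hg, rfl⟩ b ⟨g', hg', rfl⟩
      obtain ⟨y, hyP, hyg⟩ := hg.1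
      obtain ⟨y', hy'P, hy'g⟩ := hg'.1
      have hk := key_ineq m r B hB ℓ w (Fin.last r) y y' hyP hy'P
        (fun k hk => absurd hk (not_lt.mpr (Fin.le_last k)))
      rw [hyg (Fin.last r) le_rfl, hy'g (Fin.last r) le_rfl] at hk
      rw [le_div_iff₀ (gsE_pos m r B hB (Fin.last r))]
      exact hk
    obtain ⟨hTfin, hTcard⟩ := int_bdd _ _ himg
    obtain ⟨h1, h2⟩ := inj_bound _ hinj hTfin _ hTcard
    refine ⟨h1, ?_⟩
    rw [Finset.Icc_self, Finset.prod_singleton]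
    exact h2
  | cast i ih =>
    set Sc : Set (Fin (r + 1) → ℤ) :=
      { g | (∃ y ∈ {y | ∀ i, ℓ i ≤ B.mulVec y i ∧ B.mulVec y i ≤ w i},
          ∀ j, i.castSucc ≤ j → y j = (g j : ℝ)) ∧ (∀ j, j < i.castSucc → g j = 0) } with hSc
    set Ss : Set (Fin (r + 1) → ℤ) :=
      { g | (∃ y ∈ {y | ∀ i, ℓ i ≤ B.mulVec y i ∧ B.mulVec y i ≤ w i},
          ∀ j, i.succ ≤ j → y j = (g j : ℝ)) ∧ (∀ j, j < i.succ → g j = 0) } with hSs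
    set φ : (Fin (r + 1) → ℤ) → (Fin (r + 1) → ℤ) :=
      fun g => Function.update g i.castSucc 0 with hφ
    have hmap : ∀ g ∈ Sc, φ g ∈ Ss := by
      rintro g ⟨⟨y, hyP, hyg⟩, hg0⟩
      refine ⟨⟨y, hyP, ?_⟩, ?_⟩
      · intro j hj
        have hlt : i.castSucc < j := lt_of_lt_of_le (Fin.castSucc_lt_succ (i := i)) hj
        rw [show φ g j = g j from Function.update_of_ne hlt.ne' 0 g]
        exact hyg j hlt.le
      · intro j hj
        rcases eq_or_ne j i.castSucc with rfl | hne
        · exact Function.update_self _ _ _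
        · rw [show φ g j = g j from Function.update_of_ne hne 0 g]
          apply hg0
          have h1 : j.val < i.val + 1 := hj
          have h2 : j.val ≠ i.val := fun h => hne (Fin.ext h)
          have h3 : (Fin.castSucc i).val = i.val := rfl
          exact Fin.lt_def.mpr (by omega)
    have hfib : ∀ h : Fin (r + 1) → ℤ,
        ({g ∈ Sc | φ g = h}).Finite ∧ ({g ∈ Sc | φ g = h}).ncard ≤ N i.castSucc := by
      intro h
      have hinj : Set.InjOn (fun g : Fin (r + 1) → ℤ => g i.castSucc) {g ∈ Sc | φ g = h} := by
        rintro g ⟨_, hgφ⟩ g' ⟨_, hg'φ⟩ hf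
        funext j
        rcases eq_or_ne j i.castSucc with rfl | hne
        · exact hf
        · have e1 : g j = φ g j := (Function.update_of_ne hne 0 g).symm
          have e2 : g' j = φ g' j := (Function.update_of_ne hne 0 g').symm
          rw [e1, e2, hgφ, hg'φ]
      have himg : ∀ a ∈ (fun g : Fin (r + 1) → ℤ => g i.castSucc) '' {g ∈ Sc | φ g = h},
          ∀ b ∈ (fun g : Fin (r + 1) → ℤ => g i.castSucc) '' {g ∈ Sc | φ g = h},
          |(a : ℝ) - b| ≤ ‖w - ℓ‖ / ‖gsE (colsE m (r + 1) B) i.castSucc‖ := by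
        rintro a ⟨g, ⟨hgS, hgφ⟩, rfl⟩ b ⟨g', ⟨hg'S, hg'φ⟩, rfl⟩
        obtain ⟨y, hyP, hyg⟩ := hgS.1
        obtain ⟨y', hy'P, hy'g⟩ := hg'S.1
        have heq : ∀ k, i.castSucc < k → y k = y' k := by
          intro k hk
          have e1 : g k = h k := by rw [← hgφ]; exact (Function.update_of_ne hk.ne' 0 g).symm
          have e2 : g' k = h k := by rw [← hg'φ]; exact (Function.update_of_ne hk.ne' 0 g').symm
          rw [hyg k hk.le, hy'g k hk.le, e1, e2]
        have hk := key_ineq m r B hB ℓ w i.castSucc y y' hyP hy'P heq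
        rw [hyg i.castSucc le_rfl, hy'g i.castSucc le_rfl] at hk
        rw [le_div_iff₀ (gsE_pos m r B hB i.castSucc)]
        exact hk
      obtain ⟨hTfin, hTcard⟩ := int_bdd _ _ himg
      exact inj_bound _ hinj hTfin _ hTcard
    obtain ⟨h1, h2⟩ := fiber_bound φ Ss ih.1 hmap (N i.castSucc) hfib
    refine ⟨h1, ?_⟩
    have hIcc : Finset.Icc i.castSucc (Fin.last r)
        = insert i.castSucc (Finset.Icc i.succ (Fin.last r)) := by
      ext j
      rw [Finset.mem_insert, Finset.mem_Icc, Finset.mem_Icc]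
      constructor
      · rintro ⟨h1, h2⟩
        rcases eq_or_lt_of_le h1 with h | h
        · exact Or.inl h.symm
        · exact Or.inr ⟨Fin.castSucc_lt_iff_succ_le.mp h, h2⟩
      · rintro (rfl | ⟨h1, h2⟩)
        · exact ⟨le_rfl, Fin.le_last _⟩
        · exact ⟨le_trans (Fin.castSucc_lt_succ (i := i)).le h1, h2⟩
    have hnm : i.castSucc ∉ Finset.Icc i.succ (Fin.last r) := fun hmem =>
      absurd (Finset.mem_Icc.mp hmem).1 (not_le.mpr (Fin.castSucc_lt_succ (i := i)))
    rw [hIcc, Finset.prod_insert hnm]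
    calc Sc.ncard ≤ N i.castSucc * Ss.ncard := h2
    _ ≤ N i.castSucc * ∏ j ∈ Finset.Icc i.succ (Fin.last r), N j :=
        Nat.mul_le_mul_left _ ih.2
end

section
/- Let G_{m,n}(M) be the set of m×n integer matrices with entries in {1,...,M}. For a positive integer k, the fraction ε_R of A ∈ G_{m,n}(M) for which the lattice L_R(A) generated by the columns of the (m+n)×n matrix (A; I) contains a nonzero vector of norm at most k satisfies ε_R ≤ (2k+1)^{n+m} / M^m. -/
/-- The Euclidean norm of an integer vector. -/
noncomputable def intNorm {n : ℕ} (v : Fin n → ℤ) : ℝ :=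
  Real.sqrt (∑ i, ((v i : ℝ)) ^ 2)

lemma mem_Icc_of_sq_le_sq (a : ℤ) (b : ℕ) (h : a ^ 2 ≤ (b : ℤ) ^ 2) :
    a ∈ Finset.Icc (-(b : ℤ)) b := by
  have hb : (0 : ℤ) ≤ b := Int.ofNat_nonneg b
  simp only [Finset.mem_Icc]
  constructor <;> nlinarith

lemma card_Icc_one (M : ℕ) : (Finset.Icc (1 : ℤ) M).card = M := by
  rw [Int.card_Icc]; omega

lemma card_fiber_le (m n M : ℕ) (w : Fin m → ℤ) (v : Fin n → ℤ) (hv : v ≠ 0) :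
    ((Fintype.piFinset fun _ : Fin m => Fintype.piFinset fun _ : Fin n =>
        Finset.Icc (1 : ℤ) M).filter (fun A => Matrix.mulVec A v = w)).card
      ≤ M ^ (m * (n - 1)) := by
  obtain ⟨j0, hj0⟩ : ∃ j0, v j0 ≠ 0 := Function.ne_iff.mp hv
  set S0 : Finset ((Fin m) → (Fin n) → ℤ) :=
    Fintype.piFinset fun _ : Fin m => Fintype.piFinset fun j : Fin n =>
      if j = j0 then ({0} : Finset ℤ) else Finset.Icc (1 : ℤ) M with hS0
  have hcard : S0.card = M ^ (m * (n - 1)) := by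
    rw [hS0, Fintype.card_piFinset]
    have h1 : ∀ i : Fin m, (Fintype.piFinset fun j : Fin n =>
        if j = j0 then ({0} : Finset ℤ) else Finset.Icc (1 : ℤ) M).card = M ^ (n - 1) := by
      intro i
      rw [Fintype.card_piFinset]
      have h2 : ∀ j : Fin n, (if j = j0 then ({0} : Finset ℤ) else Finset.Icc (1 : ℤ) M).card
          = if j = j0 then 1 else M := by
        intro j
        split
        · simp
        · exact card_Icc_one M
      simp only [h2]
      rw [← Finset.prod_erase (f := fun x : Fin n => if x = j0 then 1 else M)
        Finset.univ (if_pos rfl)]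
      have h4 : ∏ j ∈ Finset.univ.erase j0, (if j = j0 then 1 else M)
          = ∏ _j ∈ Finset.univ.erase j0, M :=
        Finset.prod_congr rfl (fun j hj => if_neg (Finset.ne_of_mem_erase hj))
      rw [h4, Finset.prod_const, Finset.card_erase_of_mem (Finset.mem_univ j0),
        Finset.card_univ, Fintype.card_fin]
    rw [Finset.prod_congr rfl (fun i _ => h1 i), Finset.prod_const, Finset.card_univ,
      Fintype.card_fin, ← pow_mul, mul_comm (n-1) m]
  rw [← hcard]
  apply Finset.card_le_card_of_injOn (fun A i j => if j = j0 then 0 else A i j)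
  · intro A hA
    replace hA := Finset.mem_filter.mp (Finset.mem_coe.mp hA)
    have hA1 : ∀ i j, A i j ∈ Finset.Icc (1 : ℤ) M := by
      intro i j
      exact Fintype.mem_piFinset.mp (Fintype.mem_piFinset.mp hA.1 i) j
    rw [hS0]
    refine Fintype.mem_piFinset.mpr fun i => Fintype.mem_piFinset.mpr fun j => ?_
    by_cases hj : j = j0
    · simp [hj]
    · simpa [hj] using hA1 i j
  · intro A hA B hB hAB
    replace hA := Finset.mem_filter.mp (Finset.mem_coe.mp hA)
    replace hB := Finset.mem_filter.mp (Finset.mem_coe.mp hB)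
    funext i j
    have hoff : ∀ j', j' ≠ j0 → A i j' = B i j' := by
      intro j' hj'
      have := congrFun (congrFun hAB i) j'
      simpa [hj'] using this
    by_cases hj : j = j0
    · subst hj
      have hmA : ∑ j', A i j' * v j' = w i := by
        simpa [Matrix.mulVec, dotProduct] using congrFun hA.2 i
      have hmB : ∑ j', B i j' * v j' = w i := by
        simpa [Matrix.mulVec, dotProduct] using congrFun hB.2 i
      have hsplitA := Finset.add_sum_erase Finset.univ (fun j' => A i j' * v j')
        (Finset.mem_univ j)
      have hsplitB := Finset.add_sum_erase Finset.univ (fun j' => B i j' * v j')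
        (Finset.mem_univ j)
      have hsum : ∑ j' ∈ Finset.univ.erase j, A i j' * v j'
          = ∑ j' ∈ Finset.univ.erase j, B i j' * v j' :=
        Finset.sum_congr rfl (fun j' hj' => by rw [hoff j' (Finset.ne_of_mem_erase hj')])
      try simp only at hsplitA hsplitB
      have hc : A i j * v j = B i j * v j := by linarith
      exact mul_right_cancel₀ hj0 hc
    · exact hoff j hj

/-- among the `m × n` integer matrices with entries in `{1, ..., M}`, the fraction
of those for which the lattice `L_R(A) = {(Ax; x) : x ∈ ℤ^n}` contains a nonzero vector of
norm at most `k` is at most `(2k+1)^{n+m} / M^m`. -/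
theorem rangespace_lattice_fraction (m n M k : ℕ) (hm : 0 < m) (hn : 0 < n) (hM : 0 < M)
    (hk : 0 < k)
    (G bad : Set (Matrix (Fin m) (Fin n) ℤ))
    (hG : G = { A | ∀ i j, A i j ∈ Finset.Icc (1 : ℤ) M })
    (hbad : bad = { A ∈ G | ∃ v : Fin n → ℤ, v ≠ 0 ∧
      Real.sqrt ((∑ i, ((A.mulVec v) i : ℝ) ^ 2) + ∑ j, ((v j : ℝ)) ^ 2) ≤ k }) :
    (bad.ncard : ℝ) / (G.ncard : ℝ) ≤ (2 * k + 1) ^ (n + m) / (M : ℝ) ^ m := by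
  set Gfin : Finset (Matrix (Fin m) (Fin n) ℤ) :=
    Fintype.piFinset fun _ : Fin m => Fintype.piFinset fun _ : Fin n => Finset.Icc (1 : ℤ) M
    with hGfin
  have hGset : G = ↑Gfin := by
    rw [hG]
    ext A
    simp only [Set.mem_setOf_eq, Finset.mem_coe, hGfin]
    constructor
    · intro h
      exact Fintype.mem_piFinset.mpr fun i => Fintype.mem_piFinset.mpr fun j => h i j
    · intro h i j
      exact Fintype.mem_piFinset.mp (Fintype.mem_piFinset.mp h i) j
  have hGcard : Gfin.card = M ^ (m * n) := by
    rw [hGfin]; erw [Fintype.card_piFinset]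
    have h1 : ∀ i : Fin m,
        (Fintype.piFinset fun _ : Fin n => Finset.Icc (1 : ℤ) M).card = M ^ n := by
      intro i
      rw [Fintype.card_piFinset]
      simp only [card_Icc_one]
      rw [Finset.prod_const, Finset.card_univ, Fintype.card_fin]
    rw [Finset.prod_congr rfl (fun i _ => h1 i), Finset.prod_const, Finset.card_univ,
      Fintype.card_fin, ← pow_mul, mul_comm n m]
  set box : Finset ((Fin m → ℤ) × (Fin n → ℤ)) :=
    (Fintype.piFinset fun _ : Fin m => Finset.Icc (-(k : ℤ)) k) ×ˢ
      (Fintype.piFinset fun _ : Fin n => Finset.Icc (-(k : ℤ)) k) with hbox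
  set V : Finset ((Fin m → ℤ) × (Fin n → ℤ)) := box.filter (fun p => p.2 ≠ 0) with hV
  set T : ((Fin m → ℤ) × (Fin n → ℤ)) → Finset (Matrix (Fin m) (Fin n) ℤ) :=
    fun p => Gfin.filter (fun A => Matrix.mulVec A p.2 = p.1) with hT
  have hsub : bad ⊆ ↑(V.biUnion T) := by
    rw [hbad]
    rintro A ⟨hAG, v, hv, hnorm⟩
    set S : ℝ := (∑ i, ((Matrix.mulVec A v) i : ℝ) ^ 2) + ∑ j, ((v j : ℝ)) ^ 2 with hS
    have hS0 : 0 ≤ S := by positivity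
    have hSle : S ≤ (k : ℝ) ^ 2 := by
      nlinarith [Real.sq_sqrt hS0, Real.sqrt_nonneg S]
    have hwle : ∀ i, (Matrix.mulVec A v i) ^ 2 ≤ (k : ℤ) ^ 2 := by
      intro i
      have h3 : ((Matrix.mulVec A v i : ℤ) : ℝ) ^ 2
          ≤ ∑ x, ((Matrix.mulVec A v x : ℤ) : ℝ) ^ 2 := by
        simpa using Finset.single_le_sum
          (f := fun x => ((Matrix.mulVec A v x : ℤ) : ℝ) ^ 2)
          (fun x _ => by positivity) (Finset.mem_univ i)
      have h2 : (0:ℝ) ≤ ∑ j, ((v j : ℝ)) ^ 2 := by positivity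
      have h4 : ((Matrix.mulVec A v i : ℤ) : ℝ) ^ 2 ≤ ((k : ℝ)) ^ 2 := by
        rw [hS] at hSle; linarith
      exact_mod_cast h4
    have hvle : ∀ j, (v j) ^ 2 ≤ (k : ℤ) ^ 2 := by
      intro j
      have h3 : ((v j : ℤ) : ℝ) ^ 2 ≤ ∑ x, ((v x : ℤ) : ℝ) ^ 2 := by
        simpa using Finset.single_le_sum (f := fun x => ((v x : ℤ) : ℝ) ^ 2)
          (fun x _ => by positivity) (Finset.mem_univ j)
      have h2 : (0:ℝ) ≤ ∑ i, ((Matrix.mulVec A v i : ℤ) : ℝ) ^ 2 := by positivity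
      have h4 : ((v j : ℤ) : ℝ) ^ 2 ≤ ((k : ℝ)) ^ 2 := by
        rw [hS] at hSle; linarith
      exact_mod_cast h4
    have hmem : (Matrix.mulVec A v, v) ∈ V := by
      rw [hV, Finset.mem_filter]
      refine ⟨?_, hv⟩
      rw [hbox, Finset.mem_product]
      constructor
      · exact Fintype.mem_piFinset.mpr fun i => mem_Icc_of_sq_le_sq _ _ (hwle i)
      · exact Fintype.mem_piFinset.mpr fun j => mem_Icc_of_sq_le_sq _ _ (hvle j)
    have hGmem : A ∈ Gfin := by
      rw [hGset] at hAG
      exact Finset.mem_coe.mp hAG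
    simp only [Finset.coe_biUnion, Set.mem_iUnion]
    exact ⟨(Matrix.mulVec A v, v), hmem,
      Finset.mem_coe.mpr (Finset.mem_filter.mpr ⟨hGmem, rfl⟩)⟩
  have hVcard : V.card ≤ (2 * k + 1) ^ (n + m) := by
    calc V.card ≤ box.card := Finset.card_filter_le _ _
      _ = (2 * k + 1) ^ (n + m) := by
        rw [hbox, Finset.card_product, Fintype.card_piFinset, Fintype.card_piFinset]
        have hc : (Finset.Icc (-(k : ℤ)) k).card = 2 * k + 1 := by
          rw [Int.card_Icc]
          omega
        simp only [hc, Finset.prod_const, Finset.card_univ, Fintype.card_fin]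
        rw [← pow_add, add_comm m n]
  have hbadcard : bad.ncard ≤ (2 * k + 1) ^ (n + m) * M ^ (m * (n - 1)) := by
    have h1 : bad.ncard ≤ (V.biUnion T).card := by
      rw [← Set.ncard_coe_finset (V.biUnion T)]
      exact Set.ncard_le_ncard hsub (Finset.finite_toSet _)
    have h2 : (V.biUnion T).card ≤ ∑ p ∈ V, (T p).card := Finset.card_biUnion_le
    have h3 : ∑ p ∈ V, (T p).card ≤ ∑ p ∈ V, M ^ (m * (n - 1)) := by
      apply Finset.sum_le_sum
      intro p hp
      rw [hV, Finset.mem_filter] at hp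
      exact card_fiber_le m n M p.1 p.2 hp.2
    have h4 : ∑ p ∈ V, M ^ (m * (n - 1)) = V.card * M ^ (m * (n - 1)) := by
      rw [Finset.sum_const, smul_eq_mul]
    have h5 : V.card * M ^ (m * (n - 1)) ≤ (2 * k + 1) ^ (n + m) * M ^ (m * (n - 1)) :=
      Nat.mul_le_mul_right _ hVcard
    omega
  rw [hGset, Set.ncard_coe_finset, hGcard]
  push_cast
  have hexp : m * n = m * (n - 1) + m := by
    rw [← Nat.mul_succ]
    congr 1
    omega
  have key : (((2 * k + 1) ^ (n + m) * M ^ (m * (n - 1)) : ℕ) : ℝ) / ((M : ℝ) ^ (m * n))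
      = ((2 * (k:ℝ) + 1)) ^ (n + m) / (M : ℝ) ^ m := by
    rw [hexp, pow_add]
    push_cast
    rw [div_eq_div_iff (by positivity) (by positivity)]
    ring
  calc (bad.ncard : ℝ) / ((M : ℝ) ^ (m * n))
      ≤ (((2 * k + 1) ^ (n + m) * M ^ (m * (n - 1)) : ℕ) : ℝ) / ((M : ℝ) ^ (m * n)) :=
        (div_le_div_iff_of_pos_right (by positivity)).mpr (by exact_mod_cast hbadcard)
    _ = _ := by rw [key]
end

section
/- Let A be an m×n integer matrix with linearly independent rows, and let B be an n×(n−m) integer matrix whose columns form a basis of the lattice L_N(A) = { x ∈ Z^n : Ax = 0 }, with Gram-Schmidt vectors b_1^*, ..., b_{n−m}^*. If ‖b_i^*‖ > ‖w_2 − ℓ_2‖ for all i, then the polyhedron Q_N = { y ∈ R^{n−m} : ℓ_2 − x_0 ≤ By ≤ w_2 − x_0 } contains at most one integral point, for any x_0 ∈ Z^n. -/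
open RealInnerProductSpace in
lemma inner_gs_self_s13 {E : Type*} [NormedAddCommGroup E] [InnerProductSpace ℝ E] {r : ℕ}
    (f : Fin r → E) (i : Fin r) :
    ⟪gsE f i, f i⟫ = ‖gsE f i‖ ^ 2 := by
  haveI : WellFoundedLT (Fin r) := inferInstance
  unfold gsE
  rw [InnerProductSpace.gramSchmidt_def'' ℝ f i, inner_add_right, inner_sum, real_inner_self_eq_norm_sq]
  rw [Finset.sum_eq_zero, add_zero]
  intro k hk
  rw [inner_smul_right, InnerProductSpace.gramSchmidt_orthogonal ℝ f (Finset.mem_Iio.mp hk).ne', mul_zero]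

open RealInnerProductSpace in
lemma inner_gs_earlier {E : Type*} [NormedAddCommGroup E] [InnerProductSpace ℝ E] {r : ℕ}
    (f : Fin r → E) {i j : Fin r} (h : j < i) :
    ⟪gsE f i, f j⟫ = 0 := by
  haveI : WellFoundedLT (Fin r) := inferInstance
  exact InnerProductSpace.gramSchmidt_inv_triangular ℝ f h

/-- if the columns of `B` form a basis of `L_N(A) = {x ∈ ℤ^n : Ax = 0}` whose
Gram-Schmidt vectors all satisfy `‖b_i^*‖ > ‖w₂ - ℓ₂‖`, then the nullspace reformulation
polyhedron `Q_N = {y : ℓ₂ - x₀ ≤ By ≤ w₂ - x₀}` contains at most one integral point. -/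
theorem nullspace_reformulation_subsingleton (m n : ℕ) (hmn : m ≤ n)
    (A : Matrix (Fin m) (Fin n) ℤ)
    (hA : LinearIndependent ℚ (fun i : Fin m => fun j : Fin n => (A i j : ℚ)))
    (B : Matrix (Fin n) (Fin (n - m)) ℤ)
    (hBnull : ∀ j, A.mulVec (fun i => B i j) = 0)
    (hBindep : LinearIndependent ℝ (colsE n (n - m) (B.map (Int.cast : ℤ → ℝ))))
    (hBspan : ∀ x : Fin n → ℤ, A.mulVec x = 0 → ∃ c : Fin (n - m) → ℤ, x = B.mulVec c)
    (ℓ₂ w₂ : EuclideanSpace ℝ (Fin n)) (x₀ : Fin n → ℤ)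
    (hgap : ∀ i, ‖w₂ - ℓ₂‖ < ‖gsE (colsE n (n - m) (B.map (Int.cast : ℤ → ℝ))) i‖) :
    { y : Fin (n - m) → ℤ |
      ∀ i, ℓ₂ i - (x₀ i : ℝ) ≤ (B.map (Int.cast : ℤ → ℝ)).mulVec (fun j => (y j : ℝ)) i ∧
        (B.map (Int.cast : ℤ → ℝ)).mulVec (fun j => (y j : ℝ)) i ≤ w₂ i - (x₀ i : ℝ)
      }.Subsingleton := by
  classical
  set Bℝ := B.map (Int.cast : ℤ → ℝ) with hBℝ
  set f := colsE n (n - m) Bℝ with hf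
  intro y hy z hz
  by_contra hne
  simp only [Set.mem_setOf_eq] at hy hz
  -- the difference vector
  set c : Fin (n - m) → ℤ := fun j => y j - z j with hc
  have hcne : ∃ j, c j ≠ 0 := by
    by_contra hall
    push_neg at hall
    apply hne
    funext j
    have := hall j
    simp [hc, sub_eq_zero] at this
    exact this
  set s : Finset (Fin (n - m)) := Finset.univ.filter (fun j => c j ≠ 0) with hs
  have hsne : s.Nonempty := by
    obtain ⟨j, hj⟩ := hcne
    exact ⟨j, by simp [hs, hj]⟩
  set i := s.max' hsne with hi
  have hci : c i ≠ 0 := by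
    have := s.max'_mem hsne
    simp [hs] at this
    exact this
  have hmax : ∀ j, i < j → c j = 0 := by
    intro j hj
    by_contra hcj
    exact absurd (s.le_max' j (by simp [hs, hcj])) (not_le.mpr hj)
  -- the lattice vector v = B(y - z)
  set v : EuclideanSpace ℝ (Fin n) := ∑ j, (c j : ℝ) • f j with hv
  -- components of v
  have hvk : ∀ k, v k = ∑ j, (c j : ℝ) * Bℝ k j := by
    intro k
    rw [hv]
    have : ∀ (t : Finset (Fin (n - m))),
        (∑ j ∈ t, (c j : ℝ) • f j) k = ∑ j ∈ t, (c j : ℝ) * Bℝ k j := by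
      intro t
      induction t using Finset.induction with
      | empty => simp
      | @insert a t hx ih =>
        rw [Finset.sum_insert hx, Finset.sum_insert hx, ← ih]
        have : f a k = Bℝ k a := by
          rw [hf]
          simp [colsE, WithLp.equiv_symm_apply]
        simp [PiLp.add_apply, PiLp.smul_apply, this, smul_eq_mul]
    exact this Finset.univ
  -- norm bound on v
  have hnormv : ‖v‖ ≤ ‖w₂ - ℓ₂‖ := by
    have hcomp : ∀ k, |v k| ≤ |(w₂ - ℓ₂) k| := by
      intro k
      have hsub : (w₂ - ℓ₂) k = w₂ k - ℓ₂ k := rfl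
      have hyk := hy k
      have hzk := hz k
      have hvk' : v k = Bℝ.mulVec (fun j => (y j : ℝ)) k - Bℝ.mulVec (fun j => (z j : ℝ)) k := by
        rw [hvk k]
        simp only [Matrix.mulVec, dotProduct, ← Finset.sum_sub_distrib]
        apply Finset.sum_congr rfl
        intro j _
        push_cast [hc]
        ring
      rw [hsub, hvk']
      rw [abs_le]
      constructor
      · have := hzk.2
        have := hyk.1
        rw [abs_of_nonneg (by linarith)]
        linarith
      · have := hyk.2
        have := hzk.1
        rw [abs_of_nonneg (by linarith)]
        linarith
    rw [EuclideanSpace.norm_eq, EuclideanSpace.norm_eq]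
    apply Real.sqrt_le_sqrt
    apply Finset.sum_le_sum
    intro k _
    rw [Real.norm_eq_abs, Real.norm_eq_abs]
    exact pow_le_pow_left₀ (abs_nonneg _) (hcomp k) 2
  -- inner product computation
  have hinner : inner ℝ (gsE f i) v = (c i : ℝ) * ‖gsE f i‖ ^ 2 := by
    rw [hv, inner_sum]
    rw [Finset.sum_eq_single i]
    · rw [real_inner_smul_right, inner_gs_self_s13]
    · intro j _ hj
      rcases lt_or_gt_of_ne hj with h | h
      · rw [real_inner_smul_right, inner_gs_earlier f h, mul_zero]
      · rw [hmax j h]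
        simp
    · intro h
      exact absurd (Finset.mem_univ i) h
  -- contradiction
  have hgs0 : gsE f i ≠ 0 := by
    haveI : WellFoundedLT (Fin (n - m)) := inferInstance
    exact InnerProductSpace.gramSchmidt_ne_zero i hBindep
  have hgspos : (0 : ℝ) < ‖gsE f i‖ := norm_pos_iff.mpr hgs0
  have hci1 : (1 : ℝ) ≤ |(c i : ℝ)| := by
    rw [← Int.cast_abs]
    exact_mod_cast Int.one_le_abs hci
  have hcauchy : |inner ℝ (gsE f i) v| ≤ ‖gsE f i‖ * ‖v‖ := abs_real_inner_le_norm _ _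
  rw [hinner, abs_mul, abs_of_nonneg (by positivity : (0:ℝ) ≤ ‖gsE f i‖ ^ 2)] at hcauchy
  have h1 : ‖gsE f i‖ ^ 2 ≤ ‖gsE f i‖ * ‖v‖ := by nlinarith [sq_nonneg ‖gsE f i‖]
  have h2 : ‖gsE f i‖ ≤ ‖v‖ := by
    have h3 : ‖gsE f i‖ * ‖gsE f i‖ ≤ ‖v‖ * ‖gsE f i‖ := by nlinarith
    exact le_of_mul_le_mul_right h3 hgspos
  have := hgap i
  linarith
end

section
/- Let A be an m×n integer matrix with linearly independent rows. The determinant of the lattice L_N(A) = { x ∈ Z^n : Ax = 0 } equals det(A Aᵀ)^{1/2} / gcd(A), where gcd(A) is the greatest common divisor of all m×m subdeterminants of A. -/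
open Matrix

section Aux
variable {m n : ℕ}

lemma det_mul_expand {R : Type*} [CommRing R]
    (P : Matrix (Fin m) (Fin n) R) (Q : Matrix (Fin n) (Fin m) R) :
    (P * Q).det = ∑ φ : Fin m → Fin n, (∏ i, P i (φ i)) * (Q.submatrix φ id).det := by
  have h : (P * Q).det = (Matrix.detRowAlternating (R := R) (n := Fin m)).toMultilinearMap
      (fun i => ∑ t : Fin n, P i t • Q t) := by
    show _ = Matrix.det _
    congr 1
    ext i j
    simp [Matrix.mul_apply, Finset.sum_apply]
  rw [h, MultilinearMap.map_sum]
  refine Finset.sum_congr rfl fun φ _ => ?_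
  rw [MultilinearMap.map_smul_univ]
  rfl

lemma mul_submatrix_right {R : Type*} [CommRing R] {α β γ δ : Type*} [Fintype β]
    (P : Matrix α β R) (Q : Matrix β γ R) (f : δ → γ) :
    (P * Q).submatrix id f = P * Q.submatrix id f := by
  ext i j
  simp [Matrix.mul_apply]

lemma gram_det_ne_zero {a b : ℕ} (M : Matrix (Fin a) (Fin b) ℚ)
    (h : LinearIndependent ℚ (fun i : Fin a => M i)) : (M * M.transpose).det ≠ 0 := by
  intro h0
  obtain ⟨v, hv, hMv⟩ := (Matrix.exists_mulVec_eq_zero_iff).mpr h0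
  set w : Fin b → ℚ := Matrix.vecMul v M with hw
  have hMw : (M * M.transpose).mulVec v = M.mulVec w := by
    rw [← Matrix.mulVec_mulVec, Matrix.mulVec_transpose]
  have h1 : dotProduct w w = 0 := by
    have := congrArg (dotProduct v) hMv
    rw [hMw, dotProduct_mulVec] at this
    rw [dotProduct_zero, ← hw] at this
    exact this
  have hw0 : w = 0 := by
    funext j
    have hnn : ∀ j ∈ Finset.univ, (0:ℚ) ≤ w j * w j := fun j _ => mul_self_nonneg _
    have := (Finset.sum_eq_zero_iff_of_nonneg hnn).mp h1 j (Finset.mem_univ j)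
    exact mul_self_eq_zero.mp this
  apply hv
  refine Fintype.linearIndependent_iff.mp h v ?_ |> funext
  funext j
  have := congrFun hw0 j
  simpa [hw, Matrix.vecMul, dotProduct] using this

end Aux

lemma exists_basis_extend {m n : ℕ} (hmn : m ≤ n)
    (A : Matrix (Fin m) (Fin n) ℤ)
    (B : Matrix (Fin n) (Fin (n - m)) ℤ)
    (hBnull : ∀ j, A.mulVec (fun i => B i j) = 0)
    (hBindep : LinearIndependent ℚ (fun j : Fin (n - m) => fun i : Fin n => (B i j : ℚ)))
    (hBspan : ∀ x : Fin n → ℤ, A.mulVec x = 0 → ∃ c : Fin (n - m) → ℤ, x = B.mulVec c) :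
    ∃ b : Module.Basis (Fin m ⊕ Fin (n - m)) ℤ (Fin n → ℤ),
      ∀ t, b (Sum.inr t) = fun i => B i t := by
  classical
  set f : (Fin n → ℤ) →ₗ[ℤ] (Fin m → ℤ) := Matrix.mulVecLin A with hf
  set K := LinearMap.ker f with hK
  set cols : Fin (n - m) → (Fin n → ℤ) := fun t => fun i => B i t with hcols
  have hcols_mem : ∀ t, cols t ∈ K := by
    intro t
    simp only [hK, LinearMap.mem_ker, hf, Matrix.mulVecLin_apply]
    exact hBnull t
  have hcols_li : LinearIndependent ℤ cols := by
    rw [Fintype.linearIndependent_iff]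
    intro c hc t
    have hQ : ∑ t : Fin (n - m), (c t : ℚ) • (fun i => (B i t : ℚ)) = 0 := by
      funext i
      have := congrFun hc i
      simp only [hcols, Finset.sum_apply, Pi.smul_apply, smul_eq_mul, Pi.zero_apply] at this ⊢
      exact_mod_cast this
    have := Fintype.linearIndependent_iff.mp hBindep (fun t => (c t : ℚ)) hQ t
    exact_mod_cast this
  have hdecomp : ∀ x : Fin n → ℤ, x ∈ K → ∃ c : Fin (n - m) → ℤ,
      x = ∑ t, c t • cols t := by
    intro x hx
    have hx' : A.mulVec x = 0 := hx
    obtain ⟨c, hc⟩ := hBspan x hx'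
    refine ⟨c, ?_⟩
    funext i
    rw [hc]
    simp [Matrix.mulVec, dotProduct, Finset.sum_apply, hcols, mul_comm]
  set Q := (Fin n → ℤ) ⧸ K with hQdef
  obtain ⟨r, br⟩ := Submodule.basisOfPid (Pi.basisFun ℤ (Fin m)) (LinearMap.range f)
  let eQ : Q ≃ₗ[ℤ] LinearMap.range f := f.quotKerEquivRange
  let bQ : Module.Basis (Fin r) ℤ Q := br.map eQ.symm
  haveI : Module.Free ℤ Q := Module.Free.of_basis bQ
  obtain ⟨s, hs⟩ := Module.projective_lifting_property K.mkQ
    (LinearMap.id : Q →ₗ[ℤ] Q) (Submodule.mkQ_surjective K)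
  have hsq : ∀ q : Q, K.mkQ (s q) = q := fun q => LinearMap.congr_fun hs q
  set bb : (Fin r ⊕ Fin (n - m)) → (Fin n → ℤ) := Sum.elim (fun i => s (bQ i)) cols with hbb
  have hli : LinearIndependent ℤ bb := by
    rw [Fintype.linearIndependent_iff]
    intro c hc
    rw [Fintype.sum_sum_type] at hc
    have h1 : ∑ i : Fin r, c (Sum.inl i) • bQ i = 0 := by
      have h := congrArg K.mkQ hc
      have e1 : ∀ i : Fin r, K.mkQ (s (bQ i)) = bQ i := fun i => hsq _
      have e2 : ∀ t, K.mkQ (cols t) = 0 := fun t =>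
        (Submodule.Quotient.mk_eq_zero K).mpr (hcols_mem t)
      simp only [map_add, map_sum, _root_.map_smul, map_zero, hbb,
        Sum.elim_inl, Sum.elim_inr, e1, e2, smul_zero, Finset.sum_const_zero,
        add_zero] at h
      exact h
    have hcl : ∀ i, c (Sum.inl i) = 0 :=
      Fintype.linearIndependent_iff.mp bQ.linearIndependent _ h1
    have h2 : ∑ t : Fin (n - m), c (Sum.inr t) • cols t = 0 := by
      rw [show (∑ i : Fin r, c (Sum.inl i) • bb (Sum.inl i)) = 0 by simp [hcl]] at hc
      simpa [hbb] using hc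
    have hcr : ∀ t, c (Sum.inr t) = 0 :=
      Fintype.linearIndependent_iff.mp hcols_li _ h2
    rintro (i | t)
    · exact hcl i
    · exact hcr t
  have hspan : ⊤ ≤ Submodule.span ℤ (Set.range bb) := by
    intro x _
    have hmem : x - s (K.mkQ x) ∈ K := by
      rw [← Submodule.Quotient.mk_eq_zero K]
      have h : K.mkQ (x - s (K.mkQ x)) = 0 := by
        rw [map_sub, hsq, sub_self]
      simpa [Submodule.mkQ_apply] using h
    obtain ⟨c, hc⟩ := hdecomp _ hmem
    have hx : x = (∑ t, c t • cols t) + s (K.mkQ x) := by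
      rw [← hc]; abel
    rw [hx]
    refine Submodule.add_mem _ ?_ ?_
    · exact Submodule.sum_mem _ fun t _ => Submodule.smul_mem _ _
        (Submodule.subset_span ⟨Sum.inr t, rfl⟩)
    · have h : s (K.mkQ x) = ∑ i : Fin r, (bQ.repr (K.mkQ x)) i • s (bQ i) := by
        conv_lhs => rw [← bQ.sum_repr (K.mkQ x)]
        rw [map_sum]
        simp only [_root_.map_smul]
      rw [h]
      exact Submodule.sum_mem _ fun i _ => Submodule.smul_mem _ _
        (Submodule.subset_span ⟨Sum.inl i, rfl⟩)
  let b0 : Module.Basis (Fin r ⊕ Fin (n - m)) ℤ (Fin n → ℤ) := Module.Basis.mk hli hspan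
  have hcard : r + (n - m) = n := by
    have h1 := Module.finrank_eq_card_basis b0
    have h2 := Module.finrank_eq_card_basis (Pi.basisFun ℤ (Fin n))
    rw [h1] at h2
    simpa [Fintype.card_sum] using h2
  have hr : r = m := by omega
  refine ⟨b0.reindex (Equiv.sumCongr (finCongr hr) (Equiv.refl (Fin (n - m)))), fun t => ?_⟩
  rw [Module.Basis.reindex_apply]
  simp [b0, Module.Basis.mk_apply, hbb, hcols]

/-- The gcd of the `m × m` subdeterminants (maximal minors) of an `m × n` integer matrix. -/
noncomputable def gcdMinors (m n : ℕ) (A : Matrix (Fin m) (Fin n) ℤ) : ℕ :=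
  Finset.univ.gcd fun f : Fin m ↪ Fin n => (A.submatrix id f).det.natAbs

lemma gcdMinors_dvd_minor {m n : ℕ} (M : Matrix (Fin m) (Fin n) ℤ) (φ : Fin m → Fin n)
    (hφ : Function.Injective φ) : (gcdMinors m n M : ℤ) ∣ (M.submatrix id φ).det := by
  have h : gcdMinors m n M ∣ ((M.submatrix id (⟨φ, hφ⟩ : Fin m ↪ Fin n)).det).natAbs :=
    Finset.gcd_dvd (Finset.mem_univ _)
  exact dvd_trans (Int.natCast_dvd_natCast.mpr h) (Int.natAbs_dvd.mpr dvd_rfl)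

lemma gcdMinors_dvd_det_mul {m n : ℕ} (M : Matrix (Fin m) (Fin n) ℤ)
    (N : Matrix (Fin n) (Fin m) ℤ) : (gcdMinors m n M : ℤ) ∣ (M * N).det := by
  have h : (M * N).det = (N.transpose * M.transpose).det := by
    rw [← Matrix.det_transpose, Matrix.transpose_mul]
  rw [h, det_mul_expand]
  refine Finset.dvd_sum fun φ _ => ?_
  by_cases hφ : Function.Injective φ
  · refine Dvd.dvd.mul_left ?_ _
    have he : (M.transpose.submatrix φ id).det = (M.submatrix id φ).det := by
      rw [← Matrix.det_transpose (M.submatrix id φ)]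
      rfl
    rw [he]
    exact gcdMinors_dvd_minor M φ hφ
  · obtain ⟨i, j, hij, hne⟩ : ∃ i j, φ i = φ j ∧ i ≠ j := by
      simp only [Function.Injective, not_forall] at hφ
      obtain ⟨i, j, h1, h2⟩ := hφ
      exact ⟨i, j, h1, h2⟩
    rw [Matrix.det_zero_of_row_eq hne (by ext t; simp [hij])]
    simp

/-- if the columns of `B` form a basis of the lattice
`L_N(A) = {x ∈ ℤ^n : Ax = 0}`, then its determinant (the square root of the Gram determinant
of `B`) equals `det(A Aᵀ)^{1/2} / gcd(A)`. -/
theorem det_nullspace_lattice (m n : ℕ) (hmn : m ≤ n)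
    (A : Matrix (Fin m) (Fin n) ℤ)
    (hA : LinearIndependent ℚ (fun i : Fin m => fun j : Fin n => (A i j : ℚ)))
    (B : Matrix (Fin n) (Fin (n - m)) ℤ)
    (hBnull : ∀ j, A.mulVec (fun i => B i j) = 0)
    (hBindep : LinearIndependent ℚ (fun j : Fin (n - m) => fun i : Fin n => (B i j : ℚ)))
    (hBspan : ∀ x : Fin n → ℤ, A.mulVec x = 0 → ∃ c : Fin (n - m) → ℤ, x = B.mulVec c) :
    Real.sqrt (((B.transpose * B).det : ℝ)) =
      Real.sqrt (((A * A.transpose).det : ℝ)) / gcdMinors m n A := by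
  classical
  obtain ⟨b, hb⟩ := exists_basis_extend hmn A B hBnull hBindep hBspan
  set e : (Fin m ⊕ Fin (n - m)) ≃ Fin n :=
    finSumFinEquiv.trans (finCongr (Nat.add_sub_cancel' hmn)) with he
  set bF : Module.Basis (Fin n) ℤ (Fin n → ℤ) := b.reindex e with hbF
  set V : Matrix (Fin n) (Fin n) ℤ := (Pi.basisFun ℤ (Fin n)).toMatrix bF with hV
  haveI : Invertible V := (Pi.basisFun ℤ (Fin n)).invertibleToMatrix bF
  set U : Matrix (Fin n) (Fin n) ℤ := ⅟V with hU
  have hVapp : ∀ i j, V i j = bF j i := by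
    intro i j
    rw [hV, Module.Basis.toMatrix_apply]
    simp [Pi.basisFun_repr]
  have hVB : ∀ (i : Fin n) (t : Fin (n - m)), V i (e (Sum.inr t)) = B i t := by
    intro i t
    rw [hVapp, hbF, Module.Basis.reindex_apply, Equiv.symm_apply_apply, hb]
  -- the matrix with rows of A followed by columns of B
  set Cb : Matrix (Fin m ⊕ Fin (n - m)) (Fin n) ℤ :=
    Matrix.of (Sum.elim (fun a => A a) (fun t l => B l t)) with hCb
  set Csq : Matrix (Fin n) (Fin n) ℤ := Cb.submatrix e.symm id with hCsq
  set A₁ : Matrix (Fin m) (Fin m) ℤ :=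
    Matrix.of (fun i i' => (A * V) i (e (Sum.inl i'))) with hA₁
  have hAV0 : ∀ (i : Fin m) (t : Fin (n - m)), (A * V) i (e (Sum.inr t)) = 0 := by
    intro i t
    have : (A * V) i (e (Sum.inr t)) = A.mulVec (fun l => B l t) i := by
      simp [Matrix.mul_apply, Matrix.mulVec, dotProduct, hVB]
    rw [this, hBnull t]
    rfl
  -- block structure results
  have hPb : Csq.det * V.det = A₁.det * (B.transpose * B).det := by
    have hblock : (Matrix.of fun u w : Fin m ⊕ Fin (n - m) => (Cb * V) u (e w)) =
        Matrix.fromBlocks A₁ 0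
          (Matrix.of fun t i' => (Cb * V) (Sum.inr t) (e (Sum.inl i'))) (B.transpose * B) := by
      ext u w
      cases u with
      | inl a =>
        cases w with
        | inl i' =>
          simp only [Matrix.fromBlocks_apply₁₁, Matrix.of_apply, hA₁]
          simp [hCb, Matrix.mul_apply]
        | inr t =>
          simp only [Matrix.fromBlocks_apply₁₂, Matrix.of_apply, Matrix.zero_apply]
          have := hAV0 a t
          simp only [Matrix.mul_apply] at this ⊢
          simpa [hCb] using this
      | inr s =>
        cases w with
        | inl i' => simp [Matrix.fromBlocks_apply₂₁]
        | inr t =>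
          simp only [Matrix.fromBlocks_apply₂₂, Matrix.of_apply]
          simp [hCb, Matrix.mul_apply, hVB, Matrix.transpose_apply]
    have h1 : (Matrix.of fun u w : Fin m ⊕ Fin (n - m) => (Cb * V) u (e w)) =
        (Csq * V).submatrix e e := by
      ext u w
      simp [hCsq, Matrix.mul_apply, Matrix.submatrix_apply]
    calc Csq.det * V.det = ((Csq * V).submatrix e e).det := by
          rw [Matrix.det_submatrix_equiv_self, Matrix.det_mul]
      _ = A₁.det * (B.transpose * B).det := by
          rw [← h1, hblock, Matrix.det_fromBlocks_zero₁₂]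
  have hQ2 : Csq.det * Csq.det = (A * A.transpose).det * (B.transpose * B).det := by
    have hblock : (Matrix.of fun u w : Fin m ⊕ Fin (n - m) => (Cb * Cb.transpose) u w) =
        Matrix.fromBlocks (A * A.transpose) 0 0 (B.transpose * B) := by
      ext u w
      cases u with
      | inl a =>
        cases w with
        | inl a' => simp [hCb, Matrix.mul_apply]
        | inr t =>
          simp only [Matrix.fromBlocks_apply₁₂, Matrix.of_apply, Matrix.zero_apply]
          have := congrFun (hBnull t) a
          simp only [Matrix.mulVec, dotProduct, Pi.zero_apply] at this
          simpa [hCb, Matrix.mul_apply] using this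
      | inr s =>
        cases w with
        | inl a' =>
          simp only [Matrix.fromBlocks_apply₂₁, Matrix.of_apply, Matrix.zero_apply]
          have := congrFun (hBnull s) a'
          simp only [Matrix.mulVec, dotProduct, Pi.zero_apply] at this
          simpa [hCb, Matrix.mul_apply, mul_comm] using this
        | inr t => simp [hCb, Matrix.mul_apply]
    have h1 : (Matrix.of fun u w : Fin m ⊕ Fin (n - m) => (Cb * Cb.transpose) u w) =
        (Csq * Csq.transpose).submatrix e e := by
      ext u w
      simp [hCsq, Matrix.mul_apply, Matrix.submatrix_apply]
    calc Csq.det * Csq.det = ((Csq * Csq.transpose).submatrix e e).det := by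
          rw [Matrix.det_submatrix_equiv_self, Matrix.det_mul, Matrix.det_transpose]
      _ = (A * A.transpose).det * (B.transpose * B).det := by
          rw [← h1, hblock, Matrix.det_fromBlocks_zero₁₂]
  have hVdet : V.det * U.det = 1 := by
    rw [hU, ← Matrix.det_mul, mul_invOf_self, Matrix.det_one]
  have hVsq : V.det * V.det = 1 := by
    rcases Int.isUnit_iff.mp (IsUnit.of_mul_eq_one _ hVdet) with h | h <;> rw [h] <;> ring
  -- nonvanishing of Gram determinants
  have hgramB : (B.transpose * B).det ≠ 0 := by
    intro h0
    have : ((B.transpose * B).map (Int.castRingHom ℚ)).det = 0 := by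
      have h2 := (RingHom.map_det (Int.castRingHom ℚ) (B.transpose * B)).symm
      rw [RingHom.mapMatrix_apply] at h2
      rw [h2, h0]
      simp
    have hmap : (B.transpose * B).map (Int.castRingHom ℚ) =
        (B.map (Int.castRingHom ℚ)).transpose * ((B.map (Int.castRingHom ℚ)).transpose).transpose := by
      rw [Matrix.transpose_transpose, Matrix.map_mul]
      congr 1
    rw [hmap] at this
    exact gram_det_ne_zero _ (by convert hBindep using 1; ext i j; simp) this
  have hgramA : (A * A.transpose).det ≠ 0 := by
    intro h0
    have : ((A * A.transpose).map (Int.castRingHom ℚ)).det = 0 := by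
      have h2 := (RingHom.map_det (Int.castRingHom ℚ) (A * A.transpose)).symm
      rw [RingHom.mapMatrix_apply] at h2
      rw [h2, h0]
      simp
    have hmap : (A * A.transpose).map (Int.castRingHom ℚ) =
        (A.map (Int.castRingHom ℚ)) * (A.map (Int.castRingHom ℚ)).transpose := by
      rw [Matrix.map_mul]
      congr 1
    rw [hmap] at this
    exact gram_det_ne_zero _ (by convert hA using 1; ext i j; simp) this
  -- key determinant identity
  have hkey : (A * A.transpose).det = A₁.det ^ 2 * (B.transpose * B).det := by
    have h2 : (Csq.det * V.det) * (Csq.det * V.det) =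
        (A₁.det * (B.transpose * B).det) * (A₁.det * (B.transpose * B).det) := by rw [hPb]
    have h3 : (A * A.transpose).det * (B.transpose * B).det =
        (A₁.det ^ 2 * (B.transpose * B).det) * (B.transpose * B).det := by
      calc (A * A.transpose).det * (B.transpose * B).det
          = Csq.det * Csq.det := hQ2.symm
        _ = (Csq.det * V.det) * (Csq.det * V.det) := by
            linear_combination (-(Csq.det * Csq.det)) * hVsq
        _ = (A₁.det ^ 2 * (B.transpose * B).det) * (B.transpose * B).det := by
            rw [hPb]; ring
    exact mul_right_cancel₀ hgramB h3
  -- gcdMinors A = |det A₁|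
  have hgcd : (gcdMinors m n A : ℤ) ∣ A₁.det := by
    have hA1 : A₁ = A * (V.submatrix id (fun i' : Fin m => e (Sum.inl i'))) := by
      ext i i'
      simp [hA₁, Matrix.mul_apply]
    rw [hA1]
    exact gcdMinors_dvd_det_mul A _
  have hfact : A = A₁ * (U.submatrix (fun i' : Fin m => e (Sum.inl i')) id) := by
    have hAVU : A = (A * V) * U := by
      rw [Matrix.mul_assoc, mul_invOf_self, Matrix.mul_one]
    rw [hAVU]
    ext i j
    rw [Matrix.mul_apply, Matrix.mul_apply]
    rw [← Equiv.sum_comp e (fun w => (A * V) i w * U w j)]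
    rw [Fintype.sum_sum_type]
    simp only [hAV0, zero_mul, Finset.sum_const_zero, add_zero]
    simp [hA₁, Matrix.mul_apply]
  have hgcd2 : A₁.det ∣ (gcdMinors m n A : ℤ) := by
    have h : (A₁.det).natAbs ∣ gcdMinors m n A := by
      refine Finset.dvd_gcd fun f _ => ?_
      have : A.submatrix id f = A₁ * ((U.submatrix (fun i' : Fin m => e (Sum.inl i')) id).submatrix id f) := by
        rw [hfact, mul_submatrix_right]
      rw [this, Matrix.det_mul]
      exact Int.natAbs_dvd_natAbs.mpr (Dvd.intro _ rfl)
    exact Int.natAbs_dvd.mp (Int.natCast_dvd_natCast.mpr h)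
  have hgsq : ((gcdMinors m n A : ℤ)) ^ 2 = A₁.det ^ 2 := by
    have h1 : (gcdMinors m n A : ℤ).natAbs = A₁.det.natAbs := by
      apply Nat.dvd_antisymm
      · exact Int.natAbs_dvd_natAbs.mpr hgcd
      · exact Int.natAbs_dvd_natAbs.mpr hgcd2
    have := congrArg (fun x : ℕ => (x:ℤ)^2) h1
    simpa [Int.natAbs_sq] using this
  have hA₁ne : A₁.det ≠ 0 := by
    intro h0
    rw [h0] at hkey
    simp at hkey
    exact hgramA hkey
  have hgne : (gcdMinors m n A : ℝ) ≠ 0 := by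
    have : (gcdMinors m n A : ℤ) ≠ 0 := by
      intro h0
      rw [h0] at hgsq
      simp at hgsq
      exact hA₁ne (by exact pow_eq_zero_iff (n := 2) (by norm_num) |>.mp hgsq.symm)
    exact_mod_cast fun h => this (by exact_mod_cast h)
  -- final computation over ℝ
  have hkeyR : ((A * A.transpose).det : ℝ) =
      (gcdMinors m n A : ℝ) ^ 2 * ((B.transpose * B).det : ℝ) := by
    have : ((A * A.transpose).det : ℤ) =
        (gcdMinors m n A : ℤ) ^ 2 * (B.transpose * B).det := by rw [hgsq, hkey]
    exact_mod_cast congrArg (fun x : ℤ => (x : ℝ)) this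
  rw [hkeyR, Real.sqrt_mul (by positivity) _, Real.sqrt_sq (by positivity)]
  rw [mul_div_cancel_left₀ _ hgne]
end
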